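/- arXiv:2011.10622 — 2 statements merged into one kernel-verified Lean document; each statement's English description precedes it below -/
import Mathlib

section
/- Let R be the commutative ℤ/2-algebra generated by elements y_α of degree 1, indexed by α ∈ (ℤ/2)ⁿ ∖ {0}, subject to the relations y_α y_β + y_α y_γ + y_β y_γ = 0 whenever α + β + γ = 0 in (ℤ/2)ⁿ. Then R is isomorphic to the subring of ℤ/2[x₁,…,xₙ][x_α⁻¹ : α ≠ 0] generated by the elements x_α⁻¹, where x_α = α₁x₁ + ⋯ + αₙxₙ, via y_α ↦ x_α⁻¹. -/
open MvPolynomial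

/-- The linear form `x_α = α₁x₁ + ⋯ + αₙxₙ` over `𝔽₂`. -/
noncomputable def xlin {n : ℕ} (α : Fin n → ZMod 2) : MvPolynomial (Fin n) (ZMod 2) :=
  ∑ i, C (α i) * X i

/-- The multiplicative set of the nonzero linear forms. -/
noncomputable def linForms (n : ℕ) : Submonoid (MvPolynomial (Fin n) (ZMod 2)) :=
  Submonoid.closure (xlin '' {α : Fin n → ZMod 2 | α ≠ 0})

/-- `x_α⁻¹` in the localization at all nonzero linear forms. -/
noncomputable def xinv {n : ℕ} (α : Fin n → ZMod 2) (hα : α ≠ 0) :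
    Localization (linForms n) :=
  Localization.mk 1 ⟨xlin α, Submonoid.subset_closure ⟨α, hα, rfl⟩⟩

/-- The set of the elements `x_α⁻¹`, `α ≠ 0`. -/
noncomputable def xinvSet (n : ℕ) : Set (Localization (linForms n)) :=
  {x | ∃ (α : Fin n → ZMod 2) (hα : α ≠ 0), x = xinv α hα}

/-- The ideal of relations `y_αy_β + y_αy_γ + y_βy_γ` for `α + β + γ = 0`. -/
noncomputable def relIdeal (n : ℕ) :
    Ideal (MvPolynomial {α : Fin n → ZMod 2 // α ≠ 0} (ZMod 2)) :=
  Ideal.span {q | ∃ a b c : {α : Fin n → ZMod 2 // α ≠ 0},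
    (a : Fin n → ZMod 2) + b + c = 0 ∧ q = X a * X b + X a * X c + X b * X c}

/-- The abstract ring `R` generated by the `y_α` subject to the relations. -/
noncomputable abbrev presentedRing (n : ℕ) :=
  MvPolynomial {α : Fin n → ZMod 2 // α ≠ 0} (ZMod 2) ⧸ relIdeal n

set_option synthInstance.maxHeartbeats 1000000
set_option maxHeartbeats 4000000

namespace InvForms

abbrev σv (n : ℕ) := {α : Fin n → ZMod 2 // α ≠ 0}
abbrev Kf (n : ℕ) := FractionRing (MvPolynomial (Fin n) (ZMod 2))

noncomputable def ψ (n : ℕ) : MvPolynomial (Fin n) (ZMod 2) →+* Kf n := algebraMap _ _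

lemma ψ_inj {n : ℕ} : Function.Injective (ψ n) := IsFractionRing.injective _ _

section Basic




lemma zmod2_eq_one {x : ZMod 2} (h : x ≠ 0) : x = 1 := by revert x; decide

lemma zmod2_addself (x : ZMod 2) : x + x = 0 := by revert x; decide

variable {n : ℕ}

lemma vadd_self (α : Fin n → ZMod 2) : α + α = 0 := funext fun i => zmod2_addself _

lemma xlin_coeff (α : Fin n → ZMod 2) (i : Fin n) :
    MvPolynomial.coeff (Finsupp.single i 1) (xlin α) = α i := by
  classical
  rw [xlin, MvPolynomial.coeff_sum]
  rw [Finset.sum_eq_single i]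
  · simp [MvPolynomial.coeff_C_mul, MvPolynomial.coeff_X]
  · intro j _ hj
    simp [MvPolynomial.coeff_C_mul, MvPolynomial.coeff_X', Finsupp.single_eq_single_iff, hj]
  · simp

lemma xlin_inj : Function.Injective (xlin (n := n)) := by
  intro α β h
  funext i
  rw [← xlin_coeff α i, ← xlin_coeff β i, h]

lemma xlin_eq_zero_iff {α : Fin n → ZMod 2} : xlin α = 0 ↔ α = 0 := by
  constructor
  · intro h; funext i; rw [← xlin_coeff α i, h]; simp
  · intro h; subst h; simp [xlin]

lemma xlin_add (α β : Fin n → ZMod 2) : xlin (α + β) = xlin α + xlin β := by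
  simp [xlin, add_mul, Finset.sum_add_distrib]

noncomputable def lead (a : σv n) : Fin n :=
  (Finset.univ.filter (fun i => a.1 i ≠ 0)).min' (by
    rcases Function.ne_iff.1 a.2 with ⟨i, hi⟩
    exact ⟨i, by simpa using hi⟩)

lemma lead_bit (a : σv n) : a.1 (lead a) = 1 := by
  have : lead a ∈ Finset.univ.filter (fun i => a.1 i ≠ 0) := Finset.min'_mem _ _
  rw [Finset.mem_filter] at this
  exact zmod2_eq_one this.2

lemma lead_min {a : σv n} {j : Fin n} (h : j < lead a) : a.1 j = 0 := by
  by_contra hj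
  exact absurd (Finset.min'_le _ j (by simp [hj])) (not_le.2 h)

lemma lead_unique {a : σv n} {i : Fin n} (h1 : a.1 i ≠ 0) (h2 : ∀ j, j < i → a.1 j = 0) :
    lead a = i := by
  have hle : lead a ≤ i := Finset.min'_le _ i (by simp [h1])
  rcases lt_or_eq_of_le hle with h | h
  · exact absurd (lead_bit a) (by simp [h2 _ h])
  · exact h

lemma lead_add {a b : σv n} (hne : a ≠ b) (hl : lead a = lead b) (c : σv n)
    (hc : c.1 = a.1 + b.1) : lead a < lead c := by
  by_contra h
  push_neg at h
  have hbit := lead_bit c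
  rw [hc, Pi.add_apply] at hbit
  rcases lt_or_eq_of_le h with h | h
  · have ha : a.1 (lead c) = 0 := lead_min h
    have hb : b.1 (lead c) = 0 := lead_min (hl ▸ h)
    rw [ha, hb, add_zero] at hbit
    exact absurd hbit (by decide)
  · have ha : a.1 (lead c) = 1 := h ▸ lead_bit a
    have hb : b.1 (lead c) = 1 := (hl ▸ h : lead c = lead b) ▸ lead_bit b
    rw [ha, hb] at hbit
    exact absurd hbit (by decide)


end Basic

variable {n : ℕ}

noncomputable def imF (d : σv n →₀ ℕ) : Kf n :=
  d.prod fun a e => ((ψ n) (xlin a.1))⁻¹ ^ e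

def Std (d : σv n →₀ ℕ) : Prop :=
  ∀ a ∈ d.support, ∀ b ∈ d.support, lead a = lead b → a = b






lemma zmod2_eq_zero {x : ZMod 2} (h : x ≠ 1) : x = 0 := by revert x; decide

variable {n : ℕ}










-- tail and cons
lemma tail_ne {a : σv (n+1)} (h : a.1 0 = 0) : Fin.tail a.1 ≠ 0 := by
  intro ht
  apply a.2
  rw [← Fin.cons_self_tail a.1, h, ht]
  funext i
  refine Fin.cases ?_ ?_ i <;> simp

lemma cons_ne (b : σv n) : Fin.cons 0 b.1 ≠ (0 : Fin (n+1) → ZMod 2) := by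
  intro h
  apply b.2
  have := congrArg Fin.tail h
  rwa [Fin.tail_cons] at this

noncomputable def embv (b : σv n) : σv (n+1) := ⟨Fin.cons 0 b.1, cons_ne b⟩

lemma embv_inj : Function.Injective (embv (n := n)) := by
  intro a b h
  apply Subtype.ext
  have := congrArg (fun x => Fin.tail x.1) h
  simpa [embv, Fin.tail_cons] using this

noncomputable def restd (d : σv (n+1) →₀ ℕ) : σv n →₀ ℕ :=
  Finsupp.comapDomain embv d (embv_inj.injOn)

lemma restd_apply (d : σv (n+1) →₀ ℕ) (b : σv n) : restd d b = d (embv b) := rfl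

noncomputable def keyA (d : σv (n+1) →₀ ℕ) : Fin n → ZMod 2 :=
  ∑ a ∈ d.support.filter (fun a => a.1 0 = 1), Fin.tail a.1

noncomputable def keyE (d : σv (n+1) →₀ ℕ) : ℕ :=
  ∑ a ∈ d.support.filter (fun a => a.1 0 = 1), d a

-- the embedding χ of MvPolynomial (Fin (n+1)) into RatFunc (Kf n)
noncomputable def χ (n : ℕ) : MvPolynomial (Fin (n+1)) (ZMod 2) →+* RatFunc (Kf n) :=
  ((algebraMap (Polynomial (Kf n)) (RatFunc (Kf n))).comp
    (Polynomial.mapRingHom (ψ n))).comp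
    (MvPolynomial.finSuccEquiv (ZMod 2) n).toRingEquiv.toRingHom

lemma finSuccEquiv_C (r : ZMod 2) :
    MvPolynomial.finSuccEquiv (ZMod 2) n (MvPolynomial.C r) =
      Polynomial.C (MvPolynomial.C r) := by
  simp [MvPolynomial.finSuccEquiv_apply]

lemma χ_inj : Function.Injective (χ n) := by
  have h1 : Function.Injective (algebraMap (Polynomial (Kf n)) (RatFunc (Kf n))) :=
    RatFunc.algebraMap_injective _
  have h2 : Function.Injective (Polynomial.mapRingHom (ψ n)) := by
    rw [Polynomial.coe_mapRingHom]
    exact Polynomial.map_injective _ ψ_inj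
  have h3 : Function.Injective (MvPolynomial.finSuccEquiv (ZMod 2) n).toRingEquiv.toRingHom :=
    (MvPolynomial.finSuccEquiv (ZMod 2) n).toRingEquiv.injective
  rw [χ, RingHom.coe_comp, RingHom.coe_comp]
  exact (h1.comp h2).comp h3

noncomputable def θ (n : ℕ) : Kf (n+1) →+* RatFunc (Kf n) :=
  IsFractionRing.lift (g := χ n) χ_inj

lemma θψ (x : MvPolynomial (Fin (n+1)) (ZMod 2)) : θ n (ψ (n+1) x) = χ n x :=
  IsFractionRing.lift_algebraMap _ _

lemma finSuccEquiv_xlin (α : Fin (n+1) → ZMod 2) :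
    MvPolynomial.finSuccEquiv (ZMod 2) n (xlin α) =
      Polynomial.C (MvPolynomial.C (α 0)) * Polynomial.X +
        Polynomial.C (xlin (Fin.tail α)) := by
  rw [xlin, Fin.sum_univ_succ, map_add, map_sum]
  congr 1
  · rw [map_mul, MvPolynomial.finSuccEquiv_X_zero, finSuccEquiv_C]
  · rw [xlin, map_sum]
    refine Finset.sum_congr rfl (fun i _ => ?_)
    rw [map_mul, MvPolynomial.finSuccEquiv_X_succ, finSuccEquiv_C, ← Polynomial.C_mul]
    rfl

lemma χ_apply (p : MvPolynomial (Fin (n+1)) (ZMod 2)) :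
    χ n p = algebraMap (Polynomial (Kf n)) (RatFunc (Kf n))
      (Polynomial.map (ψ n) (MvPolynomial.finSuccEquiv (ZMod 2) n p)) := rfl

lemma χ_xlin_one {α : Fin (n+1) → ZMod 2} (h : α 0 = 1) :
    χ n (xlin α) = RatFunc.X + RatFunc.C ((ψ n) (xlin (Fin.tail α))) := by
  rw [χ_apply, finSuccEquiv_xlin, h, MvPolynomial.C_1, Polynomial.map_add, Polynomial.map_mul,
    Polynomial.map_C, Polynomial.map_C, Polynomial.map_X, map_one, Polynomial.C_1, one_mul,
    map_add, RatFunc.algebraMap_X, RatFunc.algebraMap_C]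

lemma χ_xlin_zero {α : Fin (n+1) → ZMod 2} (h : α 0 = 0) :
    χ n (xlin α) = RatFunc.C ((ψ n) (xlin (Fin.tail α))) := by
  rw [χ_apply, finSuccEquiv_xlin, h, MvPolynomial.C_0, Polynomial.map_add, Polynomial.map_mul,
    Polynomial.map_C, Polynomial.map_C, Polynomial.map_X, map_zero, Polynomial.C_0, zero_mul,
    zero_add, RatFunc.algebraMap_C]




variable {n : ℕ}

lemma lead_zero_of_bit {a : σv (n+1)} (h : a.1 0 = 1) : lead a = 0 :=
  lead_unique (by rw [h]; exact one_ne_zero) (fun j hj => absurd hj (by simp))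

lemma lead_embv (b : σv n) : lead (embv b) = Fin.succ (lead b) := by
  apply lead_unique
  · show (Fin.cons 0 b.1 : Fin (n+1) → ZMod 2) (Fin.succ (lead b)) ≠ 0
    rw [Fin.cons_succ, lead_bit]; exact one_ne_zero
  · intro j hj
    rcases Fin.eq_zero_or_eq_succ j with rfl | ⟨j', rfl⟩
    · show (Fin.cons (0 : ZMod 2) b.1 : Fin (n+1) → ZMod 2) 0 = 0
      exact Fin.cons_zero _ _
    · have hj' : j' < lead b := by rwa [Fin.succ_lt_succ_iff] at hj
      show (Fin.cons 0 b.1 : Fin (n+1) → ZMod 2) (Fin.succ j') = 0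
      rw [Fin.cons_succ]
      exact lead_min hj'

lemma mem_support_restd {d : σv (n+1) →₀ ℕ} {b : σv n} :
    b ∈ (restd d).support ↔ embv b ∈ d.support := by
  rw [Finsupp.mem_support_iff, Finsupp.mem_support_iff, restd_apply]

lemma Std_restd {d : σv (n+1) →₀ ℕ} (h : Std d) : Std (restd d) := by
  intro a ha b hb hl
  have ha' := mem_support_restd.1 ha
  have hb' := mem_support_restd.1 hb
  have : lead (embv a) = lead (embv b) := by rw [lead_embv, lead_embv, hl]
  exact embv_inj (h _ ha' _ hb' this)

lemma embv_tail {a : σv (n+1)} (h : a.1 0 = 0) :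
    embv ⟨Fin.tail a.1, tail_ne h⟩ = a := by
  apply Subtype.ext
  show Fin.cons 0 (Fin.tail a.1) = a.1
  rw [← h]
  exact Fin.cons_self_tail a.1

lemma filter_eq_cases {d : σv (n+1) →₀ ℕ} (h : Std d) :
    d.support.filter (fun a => a.1 0 = 1) = ∅ ∨
      ∃ a, d.support.filter (fun a => a.1 0 = 1) = {a} := by
  classical
  rcases (d.support.filter (fun a => a.1 0 = 1)).eq_empty_or_nonempty with he | ⟨a, ha⟩
  · exact Or.inl he
  · right
    refine ⟨a, Finset.eq_singleton_iff_unique_mem.2 ⟨ha, fun b hb => ?_⟩⟩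
    obtain ⟨hbm, hbbit⟩ := Finset.mem_filter.1 hb
    obtain ⟨ham, habit⟩ := Finset.mem_filter.1 ha
    exact h _ hbm _ ham (by rw [lead_zero_of_bit hbbit, lead_zero_of_bit habit])

lemma key_inj {d d' : σv (n+1) →₀ ℕ} (hd : Std d) (hd' : Std d')
    (hA : keyA d = keyA d') (hE : keyE d = keyE d') (hR : restd d = restd d') : d = d' := by
  classical
  have aux : ∀ e e' : σv (n+1) →₀ ℕ, Std e → Std e' → keyA e = keyA e' → keyE e = keyE e' →
      ∀ a : σv (n+1), a.1 0 = 1 → a ∈ e.support → e a = e' a := by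
    intro e e' he he' hA hE a hbit hmem
    have hfe : e.support.filter (fun a => a.1 0 = 1) = {a} := by
      rcases filter_eq_cases he with h0 | ⟨a', ha'⟩
      · exact absurd (h0 ▸ Finset.mem_filter.2 ⟨hmem, hbit⟩) (Finset.notMem_empty _)
      · have : a ∈ ({a'} : Finset _) := by
          rw [← ha']; exact Finset.mem_filter.2 ⟨hmem, hbit⟩
        rw [Finset.mem_singleton] at this
        rw [ha', this]
    have hkeyEe : keyE e = e a := by rw [keyE, hfe, Finset.sum_singleton]
    have hkeyAe : keyA e = Fin.tail a.1 := by rw [keyA, hfe, Finset.sum_singleton]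
    have hne : keyE e' ≠ 0 := by
      rw [← hE, hkeyEe]; exact Finsupp.mem_support_iff.1 hmem
    rcases filter_eq_cases he' with h0 | ⟨a', ha'⟩
    · rw [keyE, h0, Finset.sum_empty] at hne; exact absurd rfl hne
    · have hkeyEe' : keyE e' = e' a' := by rw [keyE, ha', Finset.sum_singleton]
      have hkeyAe' : keyA e' = Fin.tail a'.1 := by rw [keyA, ha', Finset.sum_singleton]
      have hbit' : a'.1 0 = 1 := by
        have : a' ∈ e'.support.filter (fun a => a.1 0 = 1) := by
          rw [ha']; exact Finset.mem_singleton_self a'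
        exact (Finset.mem_filter.1 this).2
      have haa : a' = a := by
        apply Subtype.ext
        rw [← Fin.cons_self_tail a'.1, ← Fin.cons_self_tail a.1, hbit, hbit',
          ← hkeyAe, ← hkeyAe', hA]
      rw [hkeyEe.symm.trans (hE.trans hkeyEe'), haa]
  apply Finsupp.ext; intro a
  by_cases hbit : a.1 0 = 1
  · by_cases hm : a ∈ d.support
    · exact aux d d' hd hd' hA hE a hbit hm
    · by_cases hm' : a ∈ d'.support
      · exact (aux d' d hd' hd hA.symm hE.symm a hbit hm').symm
      · rw [Finsupp.notMem_support_iff.1 hm, Finsupp.notMem_support_iff.1 hm']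
  · have hbit0 : a.1 0 = 0 := zmod2_eq_zero hbit
    rw [← embv_tail hbit0, ← restd_apply, ← restd_apply, hR]

lemma theta_imF {d : σv (n+1) →₀ ℕ} (hd : Std d) :
    θ n (imF d) = RatFunc.C (imF (restd d)) *
      ((RatFunc.X + RatFunc.C ((ψ n) (xlin (keyA d))))⁻¹) ^ (keyE d) := by
  classical
  rw [imF, Finsupp.prod,
    ← Finset.prod_filter_mul_prod_filter_not d.support (fun a => a.1 0 = 1), map_mul, mul_comm]
  congr 1
  · -- non-pole part
    rw [map_prod]
    have hterm : ∀ a ∈ d.support.filter (fun a => ¬ a.1 0 = 1),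
        θ n (((ψ (n+1)) (xlin a.1))⁻¹ ^ d a)
          = RatFunc.C (((ψ n) (xlin (Fin.tail a.1)))⁻¹ ^ d a) := by
      intro a ha
      have hbit : a.1 0 = 0 := zmod2_eq_zero (Finset.mem_filter.1 ha).2
      rw [map_pow, map_inv₀, θψ, χ_xlin_zero hbit, map_pow, map_inv₀]
    rw [Finset.prod_congr rfl hterm, ← map_prod]
    congr 1
    rw [imF, Finsupp.prod]
    refine Finset.prod_bij'
      (fun a ha => (⟨Fin.tail a.1, tail_ne (zmod2_eq_zero (Finset.mem_filter.1 ha).2)⟩ : σv n))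
      (fun b hb => embv b) ?_ ?_ ?_ ?_ ?_
    · intro a ha
      rw [mem_support_restd, embv_tail (zmod2_eq_zero (Finset.mem_filter.1 ha).2)]
      exact (Finset.mem_filter.1 ha).1
    · intro b hb
      refine Finset.mem_filter.2 ⟨mem_support_restd.1 hb, ?_⟩
      show ¬ (Fin.cons 0 b.1 : Fin (n+1) → ZMod 2) 0 = 1
      rw [Fin.cons_zero]
      decide
    · intro a ha
      exact embv_tail (zmod2_eq_zero (Finset.mem_filter.1 ha).2)
    · intro b hb
      apply Subtype.ext
      show Fin.tail ((embv b).1) = b.1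
      exact Fin.tail_cons _ _
    · intro a ha
      rw [restd_apply, embv_tail (zmod2_eq_zero (Finset.mem_filter.1 ha).2)]
  · -- pole part
    rcases filter_eq_cases hd with h0 | ⟨a, ha⟩
    · rw [h0, Finset.prod_empty, map_one, keyE, h0, Finset.sum_empty, pow_zero]
    · have hbit : a.1 0 = 1 := by
        have : a ∈ d.support.filter (fun a => a.1 0 = 1) := by
          rw [ha]; exact Finset.mem_singleton_self a
        exact (Finset.mem_filter.1 this).2
      rw [ha, Finset.prod_singleton, map_pow, map_inv₀, θψ, χ_xlin_one hbit,
        keyE, ha, Finset.sum_singleton, keyA, ha, Finset.sum_singleton]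




section PF
variable {F : Type*} [Field F]




lemma pf_aux : ∀ (N : ℕ) (S : Finset (F × ℕ)), S.card ≤ N →
    (∀ p ∈ S, 1 ≤ p.2) → ∀ (c : F × ℕ → F) (c₀ : F),
    (RatFunc.C c₀ + ∑ p ∈ S, RatFunc.C (c p) * ((RatFunc.X + RatFunc.C p.1)⁻¹) ^ p.2 = 0) →
    c₀ = 0 ∧ ∀ p ∈ S, c p = 0 := by
  classical
  intro N
  induction N with
  | zero =>
    intro S hcard _ c c₀ h
    rw [Nat.le_zero, Finset.card_eq_zero] at hcard
    subst hcard
    simp only [Finset.sum_empty, add_zero] at h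
    exact ⟨(map_eq_zero _).1 h, by simp⟩
  | succ N ih =>
    intro S hcard hS c c₀ h
    rcases S.eq_empty_or_nonempty with rfl | hne
    · simp only [Finset.sum_empty, add_zero] at h
      exact ⟨(map_eq_zero _).1 h, by simp⟩
    have hA : (S.image Prod.fst).Nonempty := hne.image _
    set A := S.image Prod.fst with hAdef
    set E : F → ℕ := fun a => (S.filter (fun q : F × ℕ => q.1 = a)).sup Prod.snd with hE
    obtain ⟨astar, hastar⟩ := hA
    -- p* ∈ S
    have hfil : (S.filter (fun q : F × ℕ => q.1 = astar)).Nonempty := by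
      rcases Finset.mem_image.1 hastar with ⟨q, hq, hq1⟩
      exact ⟨q, Finset.mem_filter.2 ⟨hq, hq1⟩⟩
    obtain ⟨pst, hpstmem, hpstsup⟩ := Finset.exists_mem_eq_sup _ hfil Prod.snd
    have hpst1 : pst.1 = astar := (Finset.mem_filter.1 hpstmem).2
    have hpstS : pst ∈ S := (Finset.mem_filter.1 hpstmem).1
    have hpstE : pst.2 = E astar := by rw [hE]; exact hpstsup.symm
    have hEpos : 1 ≤ E astar := hpstE ▸ hS _ hpstS
    -- polynomials
    set D : Polynomial F := ∏ a ∈ A, (Polynomial.X + Polynomial.C a) ^ (E a) with hD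
    set Dp : F × ℕ → Polynomial F := fun p =>
      (Polynomial.X + Polynomial.C p.1) ^ (E p.1 - p.2) *
        ∏ a ∈ A.erase p.1, (Polynomial.X + Polynomial.C a) ^ (E a) with hDp
    have hkey : ∀ p ∈ S, (Polynomial.X + Polynomial.C p.1) ^ p.2 * Dp p = D := by
      intro p hp
      have hmem : p.1 ∈ A := Finset.mem_image_of_mem _ hp
      have hle : p.2 ≤ E p.1 :=
        Finset.le_sup (f := Prod.snd) (Finset.mem_filter.2 ⟨hp, rfl⟩)
      rw [hDp, hD, ← Finset.mul_prod_erase _ _ hmem, ← mul_assoc, ← pow_add,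
        Nat.add_sub_cancel' hle]
    -- lift to RatFunc
    have hXC : ∀ a : F, (RatFunc.X + RatFunc.C a) =
        algebraMap (Polynomial F) (RatFunc F) (Polynomial.X + Polynomial.C a) := by
      intro a; rw [map_add, RatFunc.algebraMap_X, RatFunc.algebraMap_C]
    have hXCne : ∀ a : F, (RatFunc.X + RatFunc.C a) ≠ 0 := by
      intro a; rw [hXC]; exact RatFunc.algebraMap_ne_zero (Polynomial.X_add_C_ne_zero a)
    -- multiply h by algebraMap D
    have h2 : (RatFunc.C c₀) * algebraMap (Polynomial F) (RatFunc F) D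
        + ∑ p ∈ S, RatFunc.C (c p) * algebraMap (Polynomial F) (RatFunc F) (Dp p) = 0 := by
      have := congrArg (· * algebraMap (Polynomial F) (RatFunc F) D) h
      simp only [add_mul, Finset.sum_mul, zero_mul] at this
      rw [← this]
      congr 1
      refine Finset.sum_congr rfl (fun p hp => ?_)
      rw [mul_assoc]
      congr 1
      have h1 := congrArg (algebraMap (Polynomial F) (RatFunc F)) (hkey p hp)
      rw [map_mul, map_pow, ← hXC] at h1
      rw [← h1, inv_pow, inv_mul_cancel_left₀ (pow_ne_zero _ (hXCne p.1))]
    -- to polynomial identity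
    have h3 : Polynomial.C c₀ * D + ∑ p ∈ S, Polynomial.C (c p) * Dp p = 0 := by
      apply RatFunc.algebraMap_injective F
      rw [map_add, map_zero, map_sum, ← h2]
      congr 1
      · rw [map_mul, RatFunc.algebraMap_C]
      · exact Finset.sum_congr rfl fun p _ => by rw [map_mul, RatFunc.algebraMap_C]
    -- evaluate at -astar
    have h4 := congrArg (Polynomial.eval (-astar)) h3
    have hevalD : Polynomial.eval (-astar) D = 0 := by
      rw [hD, Polynomial.eval_prod]
      refine Finset.prod_eq_zero hastar ?_
      rw [Polynomial.eval_pow, Polynomial.eval_add, Polynomial.eval_X, Polynomial.eval_C]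
      rw [neg_add_cancel]
      exact zero_pow (by omega)
    have hevalDp : ∀ p ∈ S, p ≠ pst → Polynomial.eval (-astar) (Dp p) = 0 := by
      intro p hp hpne
      rw [hDp, Polynomial.eval_mul, Polynomial.eval_prod]
      by_cases h1 : p.1 = astar
      · -- then p.2 < E astar
        have hle : p.2 ≤ E astar := by
          rw [← h1]; exact Finset.le_sup (f := Prod.snd) (Finset.mem_filter.2 ⟨hp, rfl⟩)
        have hlt : p.2 < E astar := by
          rcases lt_or_eq_of_le hle with h' | h'
          · exact h'
          · exact absurd (Prod.ext (h1.trans hpst1.symm) (h'.trans hpstE.symm)) hpne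
        rw [h1, Polynomial.eval_pow, Polynomial.eval_add, Polynomial.eval_X,
          Polynomial.eval_C, neg_add_cancel, zero_pow (by omega), zero_mul]
      · have hmem : astar ∈ A.erase p.1 := Finset.mem_erase.2 ⟨Ne.symm (by simpa using h1), hastar⟩
        rw [Finset.prod_eq_zero hmem, mul_zero]
        rw [Polynomial.eval_pow, Polynomial.eval_add, Polynomial.eval_X, Polynomial.eval_C,
          neg_add_cancel]
        exact zero_pow (by omega)
    have hcpst : c pst = 0 := by
      rw [Polynomial.eval_add, Polynomial.eval_mul, hevalD, mul_zero, zero_add,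
        Polynomial.eval_finset_sum, Polynomial.eval_zero] at h4
      rw [Finset.sum_eq_single pst (fun p hp hpne => by
        rw [Polynomial.eval_mul, hevalDp p hp hpne, mul_zero]) (fun h => absurd hpstS h)] at h4
      rw [Polynomial.eval_mul, Polynomial.eval_C] at h4
      have hDpst : Polynomial.eval (-astar) (Dp pst) ≠ 0 := by
        rw [hDp, Polynomial.eval_mul, Polynomial.eval_pow, Polynomial.eval_add,
          Polynomial.eval_X, Polynomial.eval_C, hpst1, neg_add_cancel, hpstE,
          Nat.sub_self, pow_zero, one_mul, Polynomial.eval_prod]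
        refine Finset.prod_ne_zero_iff.2 (fun a ha => ?_)
        rw [Polynomial.eval_pow, Polynomial.eval_add, Polynomial.eval_X, Polynomial.eval_C]
        refine pow_ne_zero _ ?_
        intro hzero
        have : a = astar := by linear_combination hzero
        exact (Finset.mem_erase.1 ha).1 (hpst1 ▸ this)
      exact by
        rcases mul_eq_zero.1 h4 with h' | h'
        · exact h'
        · exact absurd h' hDpst
    -- recurse on S.erase pst
    have hsum' : RatFunc.C c₀ + ∑ p ∈ S.erase pst,
        RatFunc.C (c p) * ((RatFunc.X + RatFunc.C p.1)⁻¹) ^ p.2 = 0 := by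
      rw [← h, ← Finset.add_sum_erase _ _ hpstS, hcpst]
      simp [add_comm, add_assoc, add_left_comm]
    have hcard' : (S.erase pst).card ≤ N := by
      have := Finset.card_erase_of_mem hpstS
      omega
    obtain ⟨hc₀, hrest⟩ := ih (S.erase pst) hcard'
      (fun p hp => hS p (Finset.mem_of_mem_erase hp)) c c₀ hsum'
    refine ⟨hc₀, fun p hp => ?_⟩
    by_cases hpp : p = pst
    · exact hpp ▸ hcpst
    · exact hrest p (Finset.mem_erase.2 ⟨hpp, hp⟩)


end PF

lemma indep : ∀ (n : ℕ) (T : Finset (σv n →₀ ℕ)), (∀ d ∈ T, Std d) →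
    ∑ d ∈ T, imF d = 0 → T = ∅ := by
  intro n
  induction n with
  | zero =>
    intro T _ hsum
    have hempty : IsEmpty (σv 0) := ⟨fun a => a.2 (funext fun i => i.elim0)⟩
    rcases T.eq_empty_or_nonempty with rfl | ⟨d, hd⟩
    · rfl
    exfalso
    have hone : ∀ d' : σv 0 →₀ ℕ, imF d' = 1 := by
      intro d'
      rw [imF, Finsupp.prod]
      have : d'.support = ∅ := Finset.eq_empty_of_isEmpty _
      rw [this, Finset.prod_empty]
    have hTd : T = {d} := by
      refine Finset.eq_singleton_iff_unique_mem.2 ⟨hd, fun b _ => ?_⟩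
      apply Finsupp.ext; intro a; exact (hempty.false a).elim
    rw [hTd, Finset.sum_singleton, hone] at hsum
    exact one_ne_zero hsum
  | succ n ih =>
    intro T hstd hsum
    classical
    set key : (σv (n+1) →₀ ℕ) → (Kf n) × ℕ := fun d => ((ψ n) (xlin (keyA d)), keyE d)
      with hkeydef
    have h0 : ∑ p ∈ T.image key, ∑ d ∈ T.filter (fun d => key d = p), θ n (imF d) = 0 := by
      rw [Finset.sum_fiberwise_of_maps_to (fun d hd => Finset.mem_image_of_mem key hd),
        ← map_sum, hsum, map_zero]
    set c : (Kf n) × ℕ → Kf n := fun p => ∑ d ∈ T.filter (fun d => key d = p), imF (restd d)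
      with hcdef
    have hfib : ∀ p ∈ T.image key, ∑ d ∈ T.filter (fun d => key d = p), θ n (imF d)
        = RatFunc.C (c p) * ((RatFunc.X + RatFunc.C p.1)⁻¹) ^ p.2 := by
      intro p _
      rw [hcdef, map_sum, Finset.sum_mul]
      refine Finset.sum_congr rfl (fun d hd => ?_)
      obtain ⟨hdT, hdkey⟩ := Finset.mem_filter.1 hd
      rw [theta_imF (hstd d hdT), ← hdkey]
    rw [Finset.sum_congr rfl hfib] at h0
    have hzero_key : ∀ p ∈ T.image key, p.2 = 0 → p = ((0 : Kf n), (0 : ℕ)) := by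
      intro p hp hp2
      rcases Finset.mem_image.1 hp with ⟨d, hdT, rfl⟩
      have hp2' : keyE d = 0 := hp2
      have hfe : d.support.filter (fun a => a.1 0 = 1) = ∅ := by
        rcases filter_eq_cases (hstd d hdT) with h | ⟨a, ha⟩
        · exact h
        · exfalso
          have hda : keyE d = d a := by rw [keyE, ha, Finset.sum_singleton]
          have haT : a ∈ d.support := by
            have : a ∈ d.support.filter (fun a => a.1 0 = 1) := by
              rw [ha]; exact Finset.mem_singleton_self a
            exact (Finset.mem_filter.1 this).1
          exact Finsupp.mem_support_iff.1 haT (by rw [← hda]; exact hp2')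
      have hA0 : keyA d = 0 := by rw [keyA, hfe, Finset.sum_empty]
      have hE0 : keyE d = 0 := by rw [keyE, hfe, Finset.sum_empty]
      refine Prod.ext ?_ ?_
      · show (ψ n) (xlin (keyA d)) = 0
        rw [hA0, xlin_eq_zero_iff.2 rfl, map_zero]
      · exact hE0
    set t1 := (T.image key).filter (fun p => ¬ p.2 = 0) with ht1
    have hsplit : RatFunc.C (∑ p ∈ (T.image key).filter (fun p => p.2 = 0), c p)
        + ∑ p ∈ t1, RatFunc.C (c p) * ((RatFunc.X + RatFunc.C p.1)⁻¹) ^ p.2 = 0 := by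
      rw [← h0, ← Finset.sum_filter_add_sum_filter_not (T.image key) (fun p => p.2 = 0)]
      congr 1
      rw [map_sum]
      refine Finset.sum_congr rfl (fun p hp => ?_)
      rw [(Finset.mem_filter.1 hp).2, pow_zero, mul_one]
    obtain ⟨hc0, hcS⟩ := pf_aux t1.card t1 le_rfl (fun p hp => by
      have := (Finset.mem_filter.1 hp).2; omega) c _ hsplit
    have hallc : ∀ p ∈ T.image key, c p = 0 := by
      intro p hp
      by_cases h2 : p.2 = 0
      · have hp00 := hzero_key p hp h2
        have hsub : (T.image key).filter (fun p => p.2 = 0) ⊆ {((0 : Kf n), (0 : ℕ))} := by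
          intro q hq
          obtain ⟨hq1, hq2⟩ := Finset.mem_filter.1 hq
          rw [Finset.mem_singleton]
          exact hzero_key q hq1 hq2
        have hpin : p ∈ (T.image key).filter (fun p => p.2 = 0) :=
          Finset.mem_filter.2 ⟨hp, h2⟩
        have heq : (T.image key).filter (fun p => p.2 = 0) = {((0 : Kf n), (0 : ℕ))} := by
          rcases Finset.subset_singleton_iff.1 hsub with h | h
          · rw [h] at hpin; exact absurd hpin (Finset.notMem_empty _)
          · exact h
        rw [heq, Finset.sum_singleton] at hc0
        rw [hp00]; exact hc0
      · exact hcS p (Finset.mem_filter.2 ⟨hp, h2⟩)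
    have hfibempty : ∀ p ∈ T.image key, T.filter (fun d => key d = p) = ∅ := by
      intro p hp
      have hcp := hallc p hp
      rw [hcdef] at hcp
      have hinj2 : ∀ d ∈ T.filter (fun d => key d = p), ∀ d' ∈ T.filter (fun d => key d = p),
          restd d = restd d' → d = d' := by
        intro d hd d' hd' hR
        obtain ⟨hdT, hdk⟩ := Finset.mem_filter.1 hd
        obtain ⟨hdT', hdk'⟩ := Finset.mem_filter.1 hd'
        have hkk : key d = key d' := hdk.trans hdk'.symm
        have hEA : keyA d = keyA d' :=
          xlin_inj (ψ_inj (congrArg Prod.fst hkk))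
        have hEE : keyE d = keyE d' := congrArg Prod.snd hkk
        exact key_inj (hstd d hdT) (hstd d' hdT') hEA hEE hR
      have himg : ∑ b ∈ (T.filter (fun d => key d = p)).image restd, imF b = 0 := by
        rw [Finset.sum_image hinj2]
        exact hcp
      have := ih ((T.filter (fun d => key d = p)).image restd)
        (fun b hb => by
          rcases Finset.mem_image.1 hb with ⟨d, hdm, rfl⟩
          exact Std_restd (hstd d (Finset.mem_filter.1 hdm).1)) himg
      exact Finset.image_eq_empty.1 this
    rcases T.eq_empty_or_nonempty with rfl | ⟨d, hd⟩
    · rfl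
    · exfalso
      have hmem : d ∈ T.filter (fun d' => key d' = key d) := Finset.mem_filter.2 ⟨hd, rfl⟩
      rw [hfibempty (key d) (Finset.mem_image_of_mem key hd)] at hmem
      exact Finset.notMem_empty d hmem









variable {n : ℕ}



















-- ### part C1 : rewriting to standard monomials

/-- `p` is a sum of a standard-monomial combination and an element of the ideal. -/
def Goodp (n : ℕ) (p : MvPolynomial (σv n) (ZMod 2)) : Prop :=
  ∃ s r : MvPolynomial (σv n) (ZMod 2),
    p = s + r ∧ (∀ d ∈ s.support, Std d) ∧ r ∈ relIdeal n

lemma good_zero : Goodp n 0 :=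
  ⟨0, 0, by simp, by simp, Ideal.zero_mem _⟩

lemma good_add {p q : MvPolynomial (σv n) (ZMod 2)} (hp : Goodp n p) (hq : Goodp n q) :
    Goodp n (p + q) := by
  obtain ⟨s, r, rfl, hs, hr⟩ := hp
  obtain ⟨s', r', rfl, hs', hr'⟩ := hq
  refine ⟨s + s', r + r', by ring, fun d hd => ?_, Ideal.add_mem _ hr hr'⟩
  rcases Finset.mem_union.1 (Finsupp.support_add hd) with h | h
  · exact hs d h
  · exact hs' d h

lemma good_ideal {r : MvPolynomial (σv n) (ZMod 2)} (hr : r ∈ relIdeal n) : Goodp n r :=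
  ⟨0, r, by ring, by simp, hr⟩

/-- weight function for termination -/
noncomputable def mw (d : σv n →₀ ℕ) : ℕ := d.sum fun a e => e * (n - (lead a : ℕ))

lemma mw_add (d e : σv n →₀ ℕ) : mw (d + e) = mw d + mw e :=
  Finsupp.sum_add_index' (fun a => by simp) (fun a b c => add_mul b c _)

lemma mw_single (a : σv n) (k : ℕ) : mw (Finsupp.single a k) = k * (n - (lead a : ℕ)) :=
  Finsupp.sum_single_index (by simp)

lemma good_of_std {d : σv n →₀ ℕ} (hstd : Std d) : Goodp n (monomial d 1) :=
  ⟨monomial d 1, 0, by ring, fun d' hd' => by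
    rw [MvPolynomial.support_monomial, if_neg one_ne_zero, Finset.mem_singleton] at hd'
    exact hd' ▸ hstd, Ideal.zero_mem _⟩

lemma good_monomial : ∀ (N : ℕ) (d : σv n →₀ ℕ), mw d ≤ N →
    Goodp n (monomial d 1) := by
  intro N
  induction N with
  | zero =>
    intro d hd
    by_cases hstd : Std d
    · exact good_of_std hstd
    · exfalso
      rw [Std] at hstd
      push_neg at hstd
      obtain ⟨a, ha, b, hb, _, _⟩ := hstd
      have h1 : 1 ≤ d a := Nat.one_le_iff_ne_zero.2 (Finsupp.mem_support_iff.1 ha)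
      have hw : 1 ≤ n - (lead a : ℕ) := by have := (lead a).isLt; omega
      have hle : d a * (n - (lead a : ℕ)) ≤
          ∑ x ∈ d.support, d x * (n - (lead x : ℕ)) :=
        Finset.single_le_sum (f := fun (x : σv n) => d x * (n - (lead x : ℕ)))
          (fun i _ => Nat.zero_le _) ha
      have hmw : mw d = ∑ x ∈ d.support, d x * (n - (lead x : ℕ)) := rfl
      nlinarith
  | succ N ihN =>
    intro d hd
    by_cases hstd : Std d
    · exact good_of_std hstd
    · rw [Std] at hstd
      push_neg at hstd
      obtain ⟨a, ha, b, hb, hl, hne⟩ := hstd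
      classical
      have hda : 1 ≤ d a := Nat.one_le_iff_ne_zero.2 (Finsupp.mem_support_iff.1 ha)
      have hdb : 1 ≤ d b := Nat.one_le_iff_ne_zero.2 (Finsupp.mem_support_iff.1 hb)
      have hδ : a.1 + b.1 ≠ 0 := by
        intro h
        apply hne
        apply Subtype.ext
        calc a.1 = a.1 + (b.1 + b.1) := by rw [vadd_self, add_zero]
        _ = (a.1 + b.1) + b.1 := by ring
        _ = b.1 := by rw [h, zero_add]
      set dl : σv n := ⟨a.1 + b.1, hδ⟩ with hdl
      have hlta : lead a < lead dl := lead_add hne hl dl rfl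
      have hltb : lead b < lead dl := hl ▸ hlta
      set d₀ : σv n →₀ ℕ := d - Finsupp.single a 1 - Finsupp.single b 1 with hd₀
      have hdec : d = d₀ + Finsupp.single a 1 + Finsupp.single b 1 := by
        apply Finsupp.ext
        intro i
        simp only [hd₀, Finsupp.add_apply, Finsupp.tsub_apply, Finsupp.single_apply]
        by_cases h1 : a = i
        · subst h1
          rw [if_pos rfl, if_neg (fun h => hne h.symm)]
          omega
        · by_cases h2 : b = i
          · subst h2
            rw [if_neg h1, if_pos rfl]
            omega
          · rw [if_neg h1, if_neg h2]
            omega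
      -- the relation
      have habc : a.1 + b.1 + dl.1 = 0 := by rw [hdl]; exact vadd_self _
      have hrel : (X a * X b + X a * X dl + X b * X dl : MvPolynomial (σv n) (ZMod 2))
          ∈ relIdeal n := Ideal.subset_span ⟨a, b, dl, habc, rfl⟩
      have hXX : (X a * X b : MvPolynomial (σv n) (ZMod 2)) =
          X a * X dl + X b * X dl + (X a * X b + X a * X dl + X b * X dl) := by
        have h1 : (X a * X dl : MvPolynomial (σv n) (ZMod 2)) + X a * X dl = 0 :=
          CharTwo.add_self_eq_zero _
        have h2 : (X b * X dl : MvPolynomial (σv n) (ZMod 2)) + X b * X dl = 0 :=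
          CharTwo.add_self_eq_zero _
        linear_combination -h1 - h2
      have hmono : (monomial d 1 : MvPolynomial (σv n) (ZMod 2)) =
          monomial d₀ 1 * (X a * X b) := by
        rw [X, X, monomial_mul, monomial_mul, mul_one, mul_one, ← add_assoc, ← hdec]
      have hmono1 : monomial d₀ 1 * (X a * X dl) =
          (monomial (d₀ + Finsupp.single a 1 + Finsupp.single dl 1) 1
            : MvPolynomial (σv n) (ZMod 2)) := by
        rw [X, X, monomial_mul, monomial_mul, mul_one, mul_one, ← add_assoc]
      have hmono2 : monomial d₀ 1 * (X b * X dl) =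
          (monomial (d₀ + Finsupp.single b 1 + Finsupp.single dl 1) 1
            : MvPolynomial (σv n) (ZMod 2)) := by
        rw [X, X, monomial_mul, monomial_mul, mul_one, mul_one, ← add_assoc]
      have hmwd : mw d = mw d₀ + (n - (lead a : ℕ)) + (n - (lead b : ℕ)) := by
        rw [hdec, mw_add, mw_add, mw_single, mw_single]
        ring
      have hm1 : mw (d₀ + Finsupp.single a 1 + Finsupp.single dl 1) ≤ N := by
        rw [mw_add, mw_add, mw_single, mw_single]
        have h1 : (lead dl : ℕ) < n := (lead dl).isLt
        have h2 : (lead b : ℕ) < (lead dl : ℕ) := hltb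
        omega
      have hm2 : mw (d₀ + Finsupp.single b 1 + Finsupp.single dl 1) ≤ N := by
        rw [mw_add, mw_add, mw_single, mw_single]
        have h1 : (lead dl : ℕ) < n := (lead dl).isLt
        have h2 : (lead a : ℕ) < (lead dl : ℕ) := hlta
        omega
      rw [hmono, hXX, mul_add, mul_add, hmono1, hmono2]
      exact good_add (good_add (ihN _ hm1) (ihN _ hm2))
        (good_ideal (Ideal.mul_mem_left _ _ hrel))

lemma good_all (p : MvPolynomial (σv n) (ZMod 2)) : Goodp n p := by
  classical
  rw [← MvPolynomial.support_sum_monomial_coeff p]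
  refine Finset.sum_induction _ _ (fun _ _ => good_add) good_zero (fun d _ => ?_)
  by_cases hc : MvPolynomial.coeff d p = 0
  · rw [hc, MvPolynomial.monomial_zero]; exact good_zero
  · rw [zmod2_eq_one hc]; exact good_monomial (mw d) d le_rfl




variable {n : ℕ}

noncomputable def Φ (n : ℕ) : MvPolynomial (σv n) (ZMod 2) →+* Kf n :=
  MvPolynomial.eval₂Hom ((ψ n).comp MvPolynomial.C) (fun a : σv n => ((ψ n) (xlin a.1))⁻¹)

lemma Φ_monomial (d : σv n →₀ ℕ) : Φ n (monomial d 1) = imF d := by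
  rw [Φ, MvPolynomial.eval₂Hom_monomial, map_one, one_mul, imF]

lemma Φ_X (a : σv n) : Φ n (X a) = ((ψ n) (xlin a.1))⁻¹ := by
  simp [Φ]

lemma ψ_ne_zero {x : MvPolynomial (Fin n) (ZMod 2)} (h : x ≠ 0) : ψ n x ≠ 0 := by
  intro h0
  exact h (ψ_inj (by rwa [map_zero]))

lemma Φ_rel (p : MvPolynomial (σv n) (ZMod 2)) (hp : p ∈ relIdeal n) : Φ n p = 0 := by
  revert p
  suffices h : relIdeal n ≤ RingHom.ker (Φ n) by
    intro p hp; exact h hp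
  rw [relIdeal, Ideal.span_le]
  rintro q ⟨a, b, c, habc, rfl⟩
  simp only [SetLike.mem_coe, RingHom.mem_ker, map_add, map_mul, Φ_X]
  set A := (ψ n) (xlin a.1) with hA
  set B := (ψ n) (xlin b.1) with hB
  set C := (ψ n) (xlin c.1) with hC
  have hAne : A ≠ 0 := ψ_ne_zero (fun h => a.2 (xlin_eq_zero_iff.1 h))
  have hBne : B ≠ 0 := ψ_ne_zero (fun h => b.2 (xlin_eq_zero_iff.1 h))
  have hCne : C ≠ 0 := ψ_ne_zero (fun h => c.2 (xlin_eq_zero_iff.1 h))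
  have hsum : A + B + C = 0 := by
    rw [hA, hB, hC, ← map_add, ← map_add, ← xlin_add, ← xlin_add, habc,
      xlin_eq_zero_iff.2 rfl, map_zero]
  have key : A⁻¹ * B⁻¹ + A⁻¹ * C⁻¹ + B⁻¹ * C⁻¹ = (A + B + C) * (A * B * C)⁻¹ := by
    field_simp
    ring
  rw [key, hsum, zero_mul]

lemma ker_Φ_le (p : MvPolynomial (σv n) (ZMod 2)) (hp : Φ n p = 0) : p ∈ relIdeal n := by
  obtain ⟨s, r, rfl, hs, hr⟩ := good_all p
  have hΦs : Φ n s = 0 := by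
    have := Φ_rel r hr
    rw [map_add, this, add_zero] at hp
    exact hp
  have hsum : ∑ d ∈ s.support, imF d = 0 := by
    rw [← hΦs]
    conv_rhs => rw [← MvPolynomial.support_sum_monomial_coeff s, map_sum]
    refine (Finset.sum_congr rfl fun d hd => ?_).symm
    rw [zmod2_eq_one (MvPolynomial.mem_support_iff.1 hd), Φ_monomial]
  have hsupp : s.support = ∅ := indep n s.support hs hsum
  have hs0 : s = 0 := by
    ext d
    by_contra h
    have : d ∈ s.support := MvPolynomial.mem_support_iff.2 (by exact h)
    rw [hsupp] at this
    exact Finset.notMem_empty _ this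
  rw [hs0, zero_add]
  exact hr

-- localization machinery
lemma linForms_ne_zero {x : MvPolynomial (Fin n) (ZMod 2)} (hx : x ∈ linForms n) : x ≠ 0 := by
  induction hx using Submonoid.closure_induction with
  | mem y hy =>
    rcases hy with ⟨α, hα, rfl⟩
    exact fun h => hα (xlin_eq_zero_iff.1 h)
  | one => exact one_ne_zero
  | mul x y _ _ hx hy => exact mul_ne_zero hx hy

lemma linForms_le_nzd : linForms n ≤ nonZeroDivisors (MvPolynomial (Fin n) (ZMod 2)) :=
  fun x hx => mem_nonZeroDivisors_of_ne_zero (linForms_ne_zero hx)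

noncomputable def jloc (n : ℕ) : Localization (linForms n) →+* Kf n :=
  IsLocalization.lift (M := linForms n) (S := Localization (linForms n))
    (g := ψ n) (fun y => isUnit_iff_ne_zero.2 (ψ_ne_zero (linForms_ne_zero y.2)))

lemma jloc_algebraMap (x : MvPolynomial (Fin n) (ZMod 2)) :
    jloc n (algebraMap _ (Localization (linForms n)) x) = ψ n x :=
  IsLocalization.lift_eq _ _

lemma jloc_inj : Function.Injective (jloc n) := by
  rw [jloc, IsLocalization.lift_injective_iff]
  intro x y
  constructor
  · intro h
    exact congrArg (ψ n) (IsLocalization.injective _ linForms_le_nzd h)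
  · intro h
    exact congrArg _ (ψ_inj h)

lemma jloc_xinv (α : Fin n → ZMod 2) (hα : α ≠ 0) :
    jloc n (xinv α hα) = ((ψ n) (xlin α))⁻¹ := by
  have hne : (ψ n) (xlin α) ≠ 0 := ψ_ne_zero (fun h => hα (xlin_eq_zero_iff.1 h))
  rw [xinv, Localization.mk_eq_mk', jloc]
  refine (IsLocalization.lift_mk'_spec _ _ _ _).2 ?_
  rw [map_one]
  exact (mul_inv_cancel₀ hne).symm

noncomputable def floc (n : ℕ) : MvPolynomial (σv n) (ZMod 2) →+* Localization (linForms n) :=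
  MvPolynomial.eval₂Hom
    ((algebraMap (MvPolynomial (Fin n) (ZMod 2)) (Localization (linForms n))).comp
      MvPolynomial.C)
    (fun a : σv n => xinv a.1 a.2)

lemma floc_X (a : σv n) : floc n (X a) = xinv a.1 a.2 := by simp [floc]

lemma jloc_floc (p : MvPolynomial (σv n) (ZMod 2)) : jloc n (floc n p) = Φ n p := by
  have : (jloc n).comp (floc n) = Φ n := by
    apply MvPolynomial.ringHom_ext
    · intro r
      rw [RingHom.comp_apply]
      rw [show (floc n) (MvPolynomial.C r) =
        algebraMap (MvPolynomial (Fin n) (ZMod 2)) (Localization (linForms n))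
          (MvPolynomial.C r) by simp [floc]]
      rw [jloc_algebraMap]
      simp [Φ]
    · intro a
      rw [RingHom.comp_apply, floc_X, jloc_xinv, Φ_X]
  exact RingHom.congr_fun this p

lemma ker_floc : RingHom.ker (floc n) = relIdeal n := by
  ext p
  rw [RingHom.mem_ker]
  constructor
  · intro h
    exact ker_Φ_le p (by rw [← jloc_floc, h, map_zero])
  · intro h
    apply jloc_inj
    rw [jloc_floc, map_zero]
    exact Φ_rel p h

lemma range_floc : (floc n).range = Subring.closure (xinvSet n) := by
  apply le_antisymm
  · rintro y ⟨p, rfl⟩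
    induction p using MvPolynomial.induction_on with
    | C r =>
      rcases (by decide : ∀ r : ZMod 2, r = 0 ∨ r = 1) r with h | h
      · subst h; rw [map_zero, map_zero]; exact Subring.zero_mem _
      · subst h; rw [map_one, map_one]; exact Subring.one_mem _
    | add p q hp hq => rw [map_add]; exact Subring.add_mem _ hp hq
    | mul_X p a hp =>
      rw [map_mul, floc_X]
      exact Subring.mul_mem _ hp (Subring.subset_closure ⟨a.1, a.2, rfl⟩)
  · rw [Subring.closure_le]
    rintro y ⟨α, hα, rfl⟩
    exact ⟨X ⟨α, hα⟩, floc_X _⟩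


end InvForms

open InvForms


theorem presentedRing_iso_subring' (n : ℕ) :
    ∃ e : (MvPolynomial (σv n) (ZMod 2) ⧸ relIdeal n) ≃+* Subring.closure (xinvSet n),
      ∀ (α : Fin n → ZMod 2) (hα : α ≠ 0),
        e (Ideal.Quotient.mk (relIdeal n) (X ⟨α, hα⟩)) =
          ⟨xinv α hα, Subring.subset_closure ⟨α, hα, rfl⟩⟩ := by
  refine ⟨(Ideal.quotEquivOfEq ker_floc.symm).trans
    ((RingHom.quotientKerEquivRange (floc n)).trans (RingEquiv.subringCongr range_floc)), ?_⟩
  intro α hα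
  apply Subtype.ext
  rw [RingEquiv.trans_apply, RingEquiv.trans_apply, Ideal.quotEquivOfEq_mk]
  show ((RingHom.quotientKerEquivRange (floc n))
    (Ideal.Quotient.mk (RingHom.ker (floc n)) (X ⟨α, hα⟩)) : Localization (linForms n))
      = xinv α hα
  rw [show ((RingHom.quotientKerEquivRange (floc n))
      (Ideal.Quotient.mk (RingHom.ker (floc n)) (X ⟨α, hα⟩)) : Localization (linForms n))
    = floc n (X ⟨α, hα⟩) from rfl]
  exact floc_X _

/-- `R` is isomorphic to the subring of the localization generated by the
`x_α⁻¹`, via `y_α ↦ x_α⁻¹`. -/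
theorem presentedRing_iso_subring (n : ℕ) :
    ∃ e : presentedRing n ≃+* Subring.closure (xinvSet n),
      ∀ (α : Fin n → ZMod 2) (hα : α ≠ 0),
        e (Ideal.Quotient.mk (relIdeal n) (X ⟨α, hα⟩)) =
          ⟨xinv α hα, Subring.subset_closure ⟨α, hα, rfl⟩⟩ := by
  obtain ⟨e, he⟩ := presentedRing_iso_subring' n
  exact ⟨e, he⟩
end

section
/- Let P̃(x) = (1/(1−x)ⁿ)·∏_{i=1}^{n}(1 + (p^{i−1}−1)x) be a formal power series over ℚ. Then (1/(1+x))·P̃(x) = (1/((1−x²)(1−x)^{n−1}))·∏_{i=1}^{n}(1 + (p^{i−1}−1)x) as formal power series, and this power series has nonnegative integer coefficients. -/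
open PowerSeries

lemma even_mul_one_sub_sq :
    (mk (fun k => if Even k then (1:ℚ) else 0) : ℚ⟦X⟧) * (1 - X ^ 2) = 1 := by
  ext k
  rw [mul_sub, mul_one, map_sub, coeff_mul_X_pow']
  rcases k with _ | _ | k
  · simp
  · simp [Nat.even_add_one]
  · have h2 : 2 ≤ k + 2 := by omega
    rw [if_pos h2]
    have he : Even (k + 2) ↔ Even k := by simp [Nat.even_add]
    simp [coeff_mk, Nat.add_sub_cancel, coeff_one, he]

lemma mk_one_eq_inv : (mk 1 : ℚ⟦X⟧) = (1 - X : ℚ⟦X⟧)⁻¹ := by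
  rw [eq_inv_iff_mul_eq_one (by simp)]
  exact mk_one_mul_one_sub_eq_one ℚ

lemma even_eq_inv :
    (mk (fun k => if Even k then (1:ℚ) else 0) : ℚ⟦X⟧) = (1 - X ^ 2 : ℚ⟦X⟧)⁻¹ := by
  rw [eq_inv_iff_mul_eq_one (by simp)]
  exact even_mul_one_sub_sq

/-- with `P̃(x) = (1/(1−x)ⁿ)∏_{i=1}^{n}(1+(p^{i−1}−1)x)` in `ℚ[[x]]`,
one has `P̃(x)/(1+x) = (1/((1−x²)(1−x)^{n−1}))∏_{i=1}^{n}(1+(p^{i−1}−1)x)`, and this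
power series has nonnegative integer coefficients. -/
theorem poincare_series_identity (p n : ℕ) (hp : 2 ≤ p) (hn : 1 ≤ n) :
    (1 + X : PowerSeries ℚ)⁻¹ *
        (((1 - X : PowerSeries ℚ)⁻¹) ^ n *
          ∏ i ∈ Finset.range n, (1 + PowerSeries.C ((p : ℚ) ^ i - 1) * X)) =
      ((1 - X ^ 2 : PowerSeries ℚ)⁻¹ * ((1 - X : PowerSeries ℚ)⁻¹) ^ (n - 1)) *
        ∏ i ∈ Finset.range n, (1 + PowerSeries.C ((p : ℚ) ^ i - 1) * X) ∧
    ∀ k : ℕ, ∃ m : ℕ,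
      (PowerSeries.coeff (R := ℚ) k)
        ((1 + X : PowerSeries ℚ)⁻¹ *
          (((1 - X : PowerSeries ℚ)⁻¹) ^ n *
            ∏ i ∈ Finset.range n, (1 + PowerSeries.C ((p : ℚ) ^ i - 1) * X))) = m := by
  obtain ⟨q, rfl⟩ := Nat.exists_eq_add_of_le hn
  have hq1 : 1 + q - 1 = q := by omega
  have hinv : (1 - X ^ 2 : ℚ⟦X⟧)⁻¹ = (1 + X : ℚ⟦X⟧)⁻¹ * (1 - X : ℚ⟦X⟧)⁻¹ := by
    rw [show (1 - X ^ 2 : ℚ⟦X⟧) = (1 - X) * (1 + X) by ring, PowerSeries.mul_inv_rev]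
  have hpow : ((1 - X : ℚ⟦X⟧)⁻¹) ^ (1 + q) = (1 - X : ℚ⟦X⟧)⁻¹ * ((1 - X : ℚ⟦X⟧)⁻¹) ^ q := by
    rw [pow_add, pow_one]
  have key : (1 + X : PowerSeries ℚ)⁻¹ *
        (((1 - X : PowerSeries ℚ)⁻¹) ^ (1 + q) *
          ∏ i ∈ Finset.range (1 + q), (1 + PowerSeries.C ((p : ℚ) ^ i - 1) * X)) =
      ((1 - X ^ 2 : PowerSeries ℚ)⁻¹ * ((1 - X : PowerSeries ℚ)⁻¹) ^ (1 + q - 1)) *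
        ∏ i ∈ Finset.range (1 + q), (1 + PowerSeries.C ((p : ℚ) ^ i - 1) * X) := by
    rw [hq1, hinv, hpow]; ring
  refine ⟨key, fun k => ?_⟩
  set G : ℕ⟦X⟧ := (mk fun j => if Even j then 1 else 0) * (mk 1) ^ q *
      ∏ i ∈ Finset.range (1 + q), (1 + PowerSeries.C (p ^ i - 1) * X) with hG
  have h1 : PowerSeries.map (Nat.castRingHom ℚ) (mk fun j => if Even j then (1:ℕ) else 0) =
      (1 - X ^ 2 : ℚ⟦X⟧)⁻¹ := by
    rw [← even_eq_inv]; ext j; simp [coeff_map, apply_ite]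
  have h2 : PowerSeries.map (Nat.castRingHom ℚ) (mk 1 : ℕ⟦X⟧) = (1 - X : ℚ⟦X⟧)⁻¹ := by
    rw [← mk_one_eq_inv]; ext j; simp [coeff_map]
  have h3 : PowerSeries.map (Nat.castRingHom ℚ)
        (∏ i ∈ Finset.range (1 + q), (1 + PowerSeries.C (p ^ i - 1) * X)) =
      ∏ i ∈ Finset.range (1 + q), (1 + PowerSeries.C ((p : ℚ) ^ i - 1) * X) := by
    rw [map_prod]
    refine Finset.prod_congr rfl fun i _ => ?_
    have hc : ((p ^ i - 1 : ℕ) : ℚ) = (p : ℚ) ^ i - 1 := by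
      rw [Nat.cast_sub (Nat.one_le_pow _ _ (by omega))]; push_cast; ring
    rw [map_add, map_one, map_mul, PowerSeries.map_C, PowerSeries.map_X,
      show ((Nat.castRingHom ℚ) (p ^ i - 1)) = ((p : ℚ) ^ i - 1) from hc]
  have htot : (1 + X : PowerSeries ℚ)⁻¹ *
        (((1 - X : PowerSeries ℚ)⁻¹) ^ (1 + q) *
          ∏ i ∈ Finset.range (1 + q), (1 + PowerSeries.C ((p : ℚ) ^ i - 1) * X)) =
      PowerSeries.map (Nat.castRingHom ℚ) G := by
    rw [key, hG, map_mul, map_mul, map_pow, h1, h2, h3, hq1]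
  refine ⟨coeff k G, ?_⟩
  rw [htot, coeff_map]
  simp
end
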